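/- arXiv:2602.12699 — 2 statements merged into one kernel-verified Lean document; each statement's English description precedes it below -/
import Mathlib

section
/- Let X and Y be Banach spaces and Z = X ⊕_∞ Y. Then (x, y) is a semi PC point of B_Z if and only if x is a semi PC point of B_X and y is a semi PC point of B_Y. -/
open Topology


/-- The weak topology on a normed space `Z`. -/
noncomputable def weakTop (Z : Type*) [NormedAddCommGroup Z] [NormedSpace ℝ Z] :
    TopologicalSpace Z :=
  TopologicalSpace.induced (fun (z : Z) (f : Z →L[ℝ] ℝ) => f z) inferInstance

/-- A point `x₀` of the closed unit ball of `Z` is a *semi PC* of `B_Z` if for every `ε > 0`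
there is a nonempty relatively weakly open subset of `B_Z` contained in `B(x₀, ε)`. -/
def IsSemiPCOfBall {Z : Type*} [NormedAddCommGroup Z] [NormedSpace ℝ Z] (x : Z) : Prop :=
  ‖x‖ ≤ 1 ∧ ∀ ε > (0 : ℝ), ∃ U : Set Z, (weakTop Z).IsOpen U ∧
    (U ∩ {z : Z | ‖z‖ ≤ 1}).Nonempty ∧ U ∩ {z : Z | ‖z‖ ≤ 1} ⊆ Metric.closedBall x ε

/-- Affine maps `a ↦ T a + c` are weak-weak continuous. -/
theorem weakTop_continuous_affine {A B : Type*} [NormedAddCommGroup A] [NormedSpace ℝ A]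
    [NormedAddCommGroup B] [NormedSpace ℝ B] (T : A →L[ℝ] B) (c : B) :
    Continuous[weakTop A, weakTop B] (fun a => T a + c) := by
  have h : Continuous[weakTop A, _] (fun a : A => fun g : A →L[ℝ] ℝ => g a) :=
    continuous_induced_dom
  have h1 : ∀ f : B →L[ℝ] ℝ, Continuous[weakTop A, _] fun a : A => f (T a + c) := by
    intro f
    have h2 : Continuous[weakTop A, _] fun a : A => (f.comp T) a + f c :=
      @Continuous.fun_add ℝ _ _ _ A (weakTop A) _ _
        (@Continuous.comp A ((A →L[ℝ] ℝ) → ℝ) ℝ (weakTop A) _ _ _ _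
          (continuous_apply (f.comp T)) h)
        (@continuous_const A ℝ (weakTop A) _ _)
    simpa [map_add] using h2
  apply continuous_induced_rng.2
  exact @continuous_pi A _ _ (weakTop A) _ _ h1

/-- For Banach spaces `X`, `Y` and `Z = X ⊕_∞ Y` (max norm), `(x, y)` is a semi PC point of
`B_Z` iff `x` is a semi PC point of `B_X` and `y` is a semi PC point of `B_Y`. -/
theorem isSemiPCOfBall_prod_top_iff
    {X Y : Type*} [NormedAddCommGroup X] [NormedSpace ℝ X] [CompleteSpace X]
    [NormedAddCommGroup Y] [NormedSpace ℝ Y] [CompleteSpace Y] (x : X) (y : Y) :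
    IsSemiPCOfBall ((WithLp.equiv ⊤ (X × Y)).symm (x, y)) ↔
      IsSemiPCOfBall x ∧ IsSemiPCOfBall y := by
  set e := (WithLp.equiv ⊤ (X × Y)).symm with he
  have hnorm : ∀ z : WithLp ⊤ (X × Y), ‖z‖ = max ‖z.fst‖ ‖z.snd‖ := fun z =>
    WithLp.prod_norm_eq_sup z
  -- continuous linear maps between Z and the factors
  set inlZ : X →L[ℝ] WithLp ⊤ (X × Y) :=
    (WithLp.prodContinuousLinearEquiv ⊤ ℝ X Y).symm.toContinuousLinearMap.comp
      (ContinuousLinearMap.inl ℝ X Y) with hinl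
  set inrZ : Y →L[ℝ] WithLp ⊤ (X × Y) :=
    (WithLp.prodContinuousLinearEquiv ⊤ ℝ X Y).symm.toContinuousLinearMap.comp
      (ContinuousLinearMap.inr ℝ X Y) with hinr
  set fstZ : WithLp ⊤ (X × Y) →L[ℝ] X :=
    (ContinuousLinearMap.fst ℝ X Y).comp
      (WithLp.prodContinuousLinearEquiv ⊤ ℝ X Y).toContinuousLinearMap with hfst
  set sndZ : WithLp ⊤ (X × Y) →L[ℝ] Y :=
    (ContinuousLinearMap.snd ℝ X Y).comp
      (WithLp.prodContinuousLinearEquiv ⊤ ℝ X Y).toContinuousLinearMap with hsnd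
  constructor
  · rintro ⟨hle, hsp⟩
    rw [hnorm] at hle
    refine ⟨⟨le_trans (le_max_left _ _) hle, ?_⟩, ⟨le_trans (le_max_right _ _) hle, ?_⟩⟩
    · -- x is semi PC
      intro ε hε
      obtain ⟨U, hUo, ⟨z₀, hz₀U, hz₀B⟩, hUsub⟩ := hsp ε hε
      have hb : ‖z₀.snd‖ ≤ 1 := le_trans (le_max_right _ _) (by rw [← hnorm z₀]; exact hz₀B)
      have hφ : Continuous[weakTop X, weakTop (WithLp ⊤ (X × Y))]
          (fun x' : X => inlZ x' + e (0, z₀.snd)) :=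
        weakTop_continuous_affine inlZ (e (0, z₀.snd))
      have key : ∀ x' : X, inlZ x' + e (0, z₀.snd) = e (x', z₀.snd) := fun x' => by
        show e (x', 0) + e (0, z₀.snd) = e (x', z₀.snd)
        rw [show ∀ a b : X × Y, e a + e b = e (a + b) from fun _ _ => rfl, Prod.mk_add_mk, add_zero, zero_add]
      refine ⟨(fun x' : X => inlZ x' + e (0, z₀.snd)) ⁻¹' U, @IsOpen.preimage _ _ (weakTop _) (weakTop (WithLp ⊤ (X × Y))) _ hφ _ hUo, ⟨z₀.fst, ?_, ?_⟩, ?_⟩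
      · show inlZ z₀.fst + e (0, z₀.snd) ∈ U
        rw [key]
        have : e (z₀.fst, z₀.snd) = z₀ := rfl
        rwa [this]
      · show ‖z₀.fst‖ ≤ 1
        exact le_trans (le_max_left _ _) (by rw [← hnorm z₀]; exact hz₀B)
      · rintro x' ⟨hx'U, hx'B⟩
        have hmem : e (x', z₀.snd) ∈ U ∩ {z : WithLp ⊤ (X × Y) | ‖z‖ ≤ 1} := by
          refine ⟨key x' ▸ hx'U, ?_⟩
          show ‖e (x', z₀.snd)‖ ≤ 1
          rw [hnorm]
          exact max_le hx'B hb
        have hd := hUsub hmem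
        rw [Metric.mem_closedBall, dist_eq_norm] at hd ⊢
        have hsub : e (x', z₀.snd) - e (x, y) = e (x' - x, z₀.snd - y) := by
          rw [show ∀ a b : X × Y, e a - e b = e (a - b) from fun _ _ => rfl, Prod.mk_sub_mk]
        rw [hsub, hnorm] at hd
        exact le_trans (le_max_left _ _) hd
    · -- y is semi PC
      intro ε hε
      obtain ⟨U, hUo, ⟨z₀, hz₀U, hz₀B⟩, hUsub⟩ := hsp ε hε
      have ha : ‖z₀.fst‖ ≤ 1 := le_trans (le_max_left _ _) (by rw [← hnorm z₀]; exact hz₀B)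
      have hφ : Continuous[weakTop Y, weakTop (WithLp ⊤ (X × Y))]
          (fun y' : Y => inrZ y' + e (z₀.fst, 0)) :=
        weakTop_continuous_affine inrZ (e (z₀.fst, 0))
      have key : ∀ y' : Y, inrZ y' + e (z₀.fst, 0) = e (z₀.fst, y') := fun y' => by
        show e (0, y') + e (z₀.fst, 0) = e (z₀.fst, y')
        rw [show ∀ a b : X × Y, e a + e b = e (a + b) from fun _ _ => rfl, Prod.mk_add_mk, add_zero, zero_add]
      refine ⟨(fun y' : Y => inrZ y' + e (z₀.fst, 0)) ⁻¹' U, @IsOpen.preimage _ _ (weakTop _) (weakTop (WithLp ⊤ (X × Y))) _ hφ _ hUo, ⟨z₀.snd, ?_, ?_⟩, ?_⟩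
      · show inrZ z₀.snd + e (z₀.fst, 0) ∈ U
        rw [key]
        have : e (z₀.fst, z₀.snd) = z₀ := rfl
        rwa [this]
      · show ‖z₀.snd‖ ≤ 1
        exact le_trans (le_max_right _ _) (by rw [← hnorm z₀]; exact hz₀B)
      · rintro y' ⟨hy'U, hy'B⟩
        have hmem : e (z₀.fst, y') ∈ U ∩ {z : WithLp ⊤ (X × Y) | ‖z‖ ≤ 1} := by
          refine ⟨key y' ▸ hy'U, ?_⟩
          show ‖e (z₀.fst, y')‖ ≤ 1
          rw [hnorm]
          exact max_le ha hy'B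
        have hd := hUsub hmem
        rw [Metric.mem_closedBall, dist_eq_norm] at hd ⊢
        have hsub : e (z₀.fst, y') - e (x, y) = e (z₀.fst - x, y' - y) := by
          rw [show ∀ a b : X × Y, e a - e b = e (a - b) from fun _ _ => rfl, Prod.mk_sub_mk]
        rw [hsub, hnorm] at hd
        exact le_trans (le_max_right _ _) hd
  · rintro ⟨⟨hx1, hxsp⟩, ⟨hy1, hysp⟩⟩
    refine ⟨by rw [hnorm]; exact max_le hx1 hy1, ?_⟩
    intro ε hε
    obtain ⟨U, hUo, ⟨a, haU, haB⟩, hUsub⟩ := hxsp ε hε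
    obtain ⟨V, hVo, ⟨b, hbV, hbB⟩, hVsub⟩ := hysp ε hε
    have hfc : Continuous[weakTop (WithLp ⊤ (X × Y)), weakTop X]
        (fun z => fstZ z + (0 : X)) := weakTop_continuous_affine fstZ 0
    have hsc : Continuous[weakTop (WithLp ⊤ (X × Y)), weakTop Y]
        (fun z => sndZ z + (0 : Y)) := weakTop_continuous_affine sndZ 0
    have keyf : ∀ z : WithLp ⊤ (X × Y), fstZ z + (0 : X) = z.fst := fun z => add_zero _
    have keys : ∀ z : WithLp ⊤ (X × Y), sndZ z + (0 : Y) = z.snd := fun z => add_zero _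
    refine ⟨(fun z => fstZ z + (0 : X)) ⁻¹' U ∩ (fun z => sndZ z + (0 : Y)) ⁻¹' V,
      @IsOpen.inter _ (weakTop (WithLp ⊤ (X × Y))) _ _
        (@IsOpen.preimage _ _ (weakTop (WithLp ⊤ (X × Y))) (weakTop X) _ hfc _ hUo)
        (@IsOpen.preimage _ _ (weakTop (WithLp ⊤ (X × Y))) (weakTop Y) _ hsc _ hVo),
      ⟨e (a, b), ⟨?_, ?_⟩, ?_⟩, ?_⟩
    · show fstZ (e (a, b)) + (0 : X) ∈ U
      rw [keyf]; exact haU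
    · show sndZ (e (a, b)) + (0 : Y) ∈ V
      rw [keys]; exact hbV
    · show ‖e (a, b)‖ ≤ 1
      rw [hnorm]
      exact max_le haB hbB
    · rintro z ⟨⟨hzU, hzV⟩, hzB⟩
      have hz1 : ‖z.fst‖ ≤ 1 := le_trans (le_max_left _ _) (by rw [← hnorm z]; exact hzB)
      have hz2 : ‖z.snd‖ ≤ 1 := le_trans (le_max_right _ _) (by rw [← hnorm z]; exact hzB)
      have hdx := hUsub ⟨keyf z ▸ hzU, hz1⟩
      have hdy := hVsub ⟨keys z ▸ hzV, hz2⟩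
      rw [Metric.mem_closedBall, dist_eq_norm] at hdx hdy ⊢
      have hsub : z - e (x, y) = e (z.fst - x, z.snd - y) := by
        rw [← Prod.mk_sub_mk, show ∀ a b : X × Y, e (a - b) = e a - e b from fun _ _ => rfl]
        rfl
      rw [hsub, hnorm]
      exact max_le hdx hdy
end

section
/- Let X and Y be Banach spaces, 1 < p < ∞, x ∈ X \ {0}, y ∈ Y \ {0}. If (x, y) is a semi PC point of B_{X ⊕_p Y}, then x/‖x‖ is a semi PC point of B_X and y/‖y‖ is a semi PC point of B_Y. -/
section Aux

variable {Z : Type*} [NormedAddCommGroup Z] [NormedSpace ℝ Z]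

/-- The `weakTop` topology coincides (definitionally) with the topology of `WeakSpace ℝ Z`. -/
lemma weakTop_eq_weakSpace : weakTop Z = (inferInstance : TopologicalSpace (WeakSpace ℝ Z)) := rfl

/-- Continuous linear functionals are weakly continuous. -/
lemma weakTop_continuous_clm (f : Z →L[ℝ] ℝ) :
    Continuous fun z : WeakSpace ℝ Z => f z :=
  WeakBilin.eval_continuous (topDualPairing ℝ Z).flip f

/-- A weakly open set contains, around any of its points, a finite-codimensional "slab". -/
lemma weakTop_basic {U : Set Z} (hU : (weakTop Z).IsOpen U) {z₀ : Z} (hz : z₀ ∈ U) :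
    ∃ I : Finset (Z →L[ℝ] ℝ), ∀ z : Z, (∀ f ∈ I, f z = f z₀) → z ∈ U := by
  obtain ⟨V, hV, hVU⟩ :=
    (isOpen_induced_iff (f := fun (z : Z) (f : Z →L[ℝ] ℝ) => f z)).mp hU
  rw [isOpen_pi_iff] at hV
  obtain ⟨I, u, hu, hsub⟩ := hV (fun f => f z₀) (by rw [← hVU] at hz; exact hz)
  refine ⟨I, fun z hzf => ?_⟩
  rw [← hVU]
  exact hsub (Set.mem_pi.2 fun f hf => by
    show f z ∈ u f
    rw [hzf f (Finset.mem_coe.mp hf)]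
    exact (hu f (Finset.mem_coe.mp hf)).2)

/-- In an infinite-dimensional space, finitely many functionals have a common unit kernel
vector. -/
lemma exists_unit_ker (hZ : ¬ FiniteDimensional ℝ Z) (I : Finset (Z →L[ℝ] ℝ)) :
    ∃ v : Z, ‖v‖ = 1 ∧ ∀ f ∈ I, f v = 0 := by
  have hker : ∃ v : Z, v ≠ 0 ∧ ∀ f ∈ I, f v = 0 := by
    by_contra hc
    push_neg at hc
    apply hZ
    let T : Z →ₗ[ℝ] (I → ℝ) := LinearMap.pi fun f => ((f : Z →L[ℝ] ℝ) : Z →ₗ[ℝ] ℝ)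
    have hT : Function.Injective T := by
      rw [← LinearMap.ker_eq_bot, LinearMap.ker_eq_bot']
      intro v hv
      by_contra hv0
      obtain ⟨f, hfI, hfv⟩ := hc v hv0
      have := congrFun hv ⟨f, hfI⟩
      exact hfv this
    exact Module.Finite.of_injective T hT
  obtain ⟨v, hv0, hv⟩ := hker
  refine ⟨‖v‖⁻¹ • v, ?_, fun f hf => by rw [map_smul, hv f hf, smul_zero]⟩
  rw [norm_smul, norm_inv, norm_norm]
  exact inv_mul_cancel₀ (norm_ne_zero_iff.mpr hv0)

/-- In finite dimension, norm-open sets are weakly open. -/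
lemma isOpen_weakTop_of_fd [FiniteDimensional ℝ Z] {U : Set Z} (hU : IsOpen U) :
    (weakTop Z).IsOpen U := by
  classical
  let b := Module.finBasis ℝ Z
  have hcont : @Continuous (WeakSpace ℝ Z) Z _ _ (fun z => ∑ i, b.repr z i • b i) := by
    refine continuous_finset_sum _ fun i _ => Continuous.smul ?_ continuous_const
    exact weakTop_continuous_clm (LinearMap.toContinuousLinearMap (b.coord i))
  have hpre : @IsOpen (WeakSpace ℝ Z) _ ((fun z : WeakSpace ℝ Z => ∑ i, b.repr z i • b i) ⁻¹' U) :=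
    hU.preimage hcont
  have hEq : (fun z : WeakSpace ℝ Z => ∑ i, b.repr z i • b i) ⁻¹' U = U := by
    ext w
    simp only [Set.mem_preimage]
    rw [b.sum_repr w]
    exact Iff.rfl
  rwa [hEq] at hpre

/-- In finite dimension, every point of the ball is a semi PC point. -/
lemma isSemiPCOfBall_of_fd [FiniteDimensional ℝ Z] {z : Z} (hz : ‖z‖ ≤ 1) :
    IsSemiPCOfBall z :=
  ⟨hz, fun ε hε => ⟨Metric.ball z ε, isOpen_weakTop_of_fd Metric.isOpen_ball,
    ⟨z, Metric.mem_ball_self hε, hz⟩, fun _ hw => Metric.ball_subset_closedBall hw.1⟩⟩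

/-- Semi PC points transfer through linear isometric equivalences. -/
lemma IsSemiPCOfBall.map_li {W : Type*} [NormedAddCommGroup W] [NormedSpace ℝ W]
    (e : Z ≃ₗᵢ[ℝ] W) {z : Z} (h : IsSemiPCOfBall z) : IsSemiPCOfBall (e z) := by
  obtain ⟨hz1, h2⟩ := h
  refine ⟨by rw [e.norm_map]; exact hz1, fun ε hε => ?_⟩
  obtain ⟨U, hU, ⟨w₀, hw₀U, hw₀B⟩, hsub⟩ := h2 ε hε
  have hU' : IsOpen (X := WeakSpace ℝ Z) U := hU
  have hcont : @Continuous (WeakSpace ℝ W) (WeakSpace ℝ Z) _ _ (fun w => e.symm w) :=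
    WeakBilin.continuous_of_continuous_eval ((topDualPairing ℝ Z).flip)
      (g := fun w : WeakSpace ℝ W => e.symm w) fun f => by
      exact weakTop_continuous_clm (f.comp (e.symm.toContinuousLinearEquiv : W →L[ℝ] Z))
  refine ⟨e.symm ⁻¹' U, hU'.preimage hcont, ⟨e w₀, ?_, ?_⟩, ?_⟩
  · show e.symm (e w₀) ∈ U
    rw [e.symm_apply_apply]; exact hw₀U
  · show ‖e w₀‖ ≤ 1
    rw [e.norm_map]; exact hw₀B
  · rintro w ⟨hwU, hwB⟩
    have hwB' : ‖e.symm w‖ ≤ 1 := by rw [e.symm.norm_map]; exact hwB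
    have := hsub ⟨hwU, hwB'⟩
    rw [Metric.mem_closedBall] at this ⊢
    calc dist w (e z) = dist (e.symm w) (e.symm (e z)) := (e.symm.dist_map w (e z)).symm
      _ = dist (e.symm w) z := by rw [e.symm_apply_apply]
      _ ≤ ε := this

end Aux

/-- Swapping the two factors of an `L^p` sum, as a linear isometric equivalence. -/
noncomputable def prodSwapLi (p : ENNReal) [Fact (1 ≤ p)] (hp : p ≠ ⊤)
    (X Y : Type*) [NormedAddCommGroup X] [NormedSpace ℝ X]
    [NormedAddCommGroup Y] [NormedSpace ℝ Y] :
    WithLp p (X × Y) ≃ₗᵢ[ℝ] WithLp p (Y × X) where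
  toLinearEquiv := (WithLp.linearEquiv p ℝ (X × Y)).trans
    ((LinearEquiv.prodComm ℝ X Y).trans (WithLp.linearEquiv p ℝ (Y × X)).symm)
  norm_map' := fun z => by
    have hq : 0 < p.toReal :=
      ENNReal.toReal_pos (zero_lt_one.trans_le (Fact.out : 1 ≤ p)).ne' hp
    rw [WithLp.prod_norm_eq_add hq, WithLp.prod_norm_eq_add hq, add_comm]
    rfl

set_option maxHeartbeats 2000000 in
/-- Main auxiliary lemma: the first-coordinate half of the theorem. -/
lemma aux_fst {X Y : Type*} [NormedAddCommGroup X] [NormedSpace ℝ X]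
    [NormedAddCommGroup Y] [NormedSpace ℝ Y]
    (p : ENNReal) [Fact (1 ≤ p)] (hp : p ≠ ⊤) (x : X) (y : Y) (hx : x ≠ 0)
    (h : IsSemiPCOfBall ((WithLp.equiv p (X × Y)).symm (x, y))) :
    IsSemiPCOfBall (‖x‖⁻¹ • x) := by
  classical
  set q : ℝ := p.toReal with hqdef
  have hq : 0 < q := ENNReal.toReal_pos (zero_lt_one.trans_le (Fact.out : 1 ≤ p)).ne' hp
  set z : WithLp p (X × Y) := (WithLp.equiv p (X × Y)).symm (x, y) with hzdef
  have hxpos : (0:ℝ) < ‖x‖ := norm_pos_iff.mpr hx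
  have hxinv : ‖‖x‖⁻¹ • x‖ = 1 := by
    rw [norm_smul, norm_inv, norm_norm, inv_mul_cancel₀ hxpos.ne']
  by_cases hfd : FiniteDimensional ℝ (WithLp p (X × Y))
  · haveI := hfd
    haveI : FiniteDimensional ℝ X :=
      Module.Finite.of_surjective
        ((LinearMap.fst ℝ X Y).comp (WithLp.linearEquiv p ℝ (X × Y)).toLinearMap)
        (Prod.fst_surjective.comp (WithLp.linearEquiv p ℝ (X × Y)).surjective)
    exact isSemiPCOfBall_of_fd (le_of_eq hxinv)
  have rpow_cancel : ∀ a : ℝ, 0 ≤ a → (a ^ q) ^ (1/q) = a := fun a ha => by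
    rw [← Real.rpow_mul ha, mul_one_div, div_self hq.ne', Real.rpow_one]
  have rpow_cancel' : ∀ a : ℝ, 0 ≤ a → (a ^ (1/q)) ^ q = a := fun a ha => by
    rw [← Real.rpow_mul ha, one_div_mul_cancel hq.ne', Real.rpow_one]
  have coord_fst : ∀ w : WithLp p (X × Y), ‖w.fst‖ ≤ ‖w‖ := fun w => by
    calc ‖w.fst‖ = (‖w.fst‖ ^ q) ^ (1/q) := (rpow_cancel _ (norm_nonneg _)).symm
      _ ≤ (‖w.fst‖ ^ q + ‖w.snd‖ ^ q) ^ (1/q) :=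
          Real.rpow_le_rpow (by positivity) (le_add_of_nonneg_right (by positivity))
            (by positivity)
      _ = ‖w‖ := (WithLp.prod_norm_eq_add hq w).symm
  have coord_snd : ∀ w : WithLp p (X × Y), ‖w.snd‖ ≤ ‖w‖ := fun w => by
    calc ‖w.snd‖ = (‖w.snd‖ ^ q) ^ (1/q) := (rpow_cancel _ (norm_nonneg _)).symm
      _ ≤ (‖w.fst‖ ^ q + ‖w.snd‖ ^ q) ^ (1/q) :=
          Real.rpow_le_rpow (by positivity) (le_add_of_nonneg_left (by positivity))
            (by positivity)
      _ = ‖w‖ := (WithLp.prod_norm_eq_add hq w).symm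
  have sum_le : ∀ w : WithLp p (X × Y), ‖w‖ ≤ 1 → ‖w.fst‖ ^ q + ‖w.snd‖ ^ q ≤ 1 := by
    intro w hw
    have h1 : ((‖w.fst‖ ^ q + ‖w.snd‖ ^ q) ^ (1/q)) ^ q ≤ 1 ^ q := by
      apply Real.rpow_le_rpow (by positivity) ?_ hq.le
      rw [← WithLp.prod_norm_eq_add hq]; exact hw
    rwa [rpow_cancel' _ (by positivity), Real.one_rpow] at h1
  have norm_le : ∀ w : WithLp p (X × Y), ‖w.fst‖ ^ q + ‖w.snd‖ ^ q ≤ 1 → ‖w‖ ≤ 1 := by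
    intro w hw
    rw [WithLp.prod_norm_eq_add hq]
    calc (‖w.fst‖ ^ q + ‖w.snd‖ ^ q) ^ (1/q) ≤ 1 ^ (1/q) :=
          Real.rpow_le_rpow (by positivity) hw (by positivity)
      _ = 1 := Real.one_rpow _
  -- Step 1 : ‖z‖ = 1
  have hz1 : ‖z‖ = 1 := by
    rcases lt_or_eq_of_le h.1 with hlt | heq
    · exfalso
      set ε := (1 - ‖z‖)/4 with hεdef
      have hεpos : 0 < ε := by rw [hεdef]; linarith
      obtain ⟨U, hU, ⟨z₀, hz₀U, hz₀B⟩, hsub⟩ := h.2 ε hεpos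
      have hz₀d : ‖z₀ - z‖ ≤ ε := by
        have := hsub ⟨hz₀U, hz₀B⟩
        rwa [Metric.mem_closedBall, dist_eq_norm] at this
      obtain ⟨I, hI⟩ := weakTop_basic hU hz₀U
      obtain ⟨v, hv1, hv0⟩ := exists_unit_ker hfd I
      set w := z₀ + (3*ε) • v with hwdef
      have hwU : w ∈ U := hI w fun f hf => by
        rw [hwdef, map_add, map_smul, hv0 f hf, smul_zero, add_zero]
      have hz₀n : ‖z₀‖ ≤ ‖z‖ + ε := by
        have := norm_sub_norm_le z₀ z
        linarith
      have hwB : ‖w‖ ≤ 1 := by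
        calc ‖w‖ ≤ ‖z₀‖ + ‖(3*ε) • v‖ := norm_add_le _ _
          _ = ‖z₀‖ + 3*ε := by
              rw [norm_smul, hv1, mul_one, Real.norm_eq_abs, abs_of_pos (by linarith)]
          _ ≤ ‖z‖ + ε + 3*ε := by linarith
          _ ≤ 1 := by rw [hεdef]; linarith
      have hwd : ‖w - z‖ ≤ ε := by
        have := hsub ⟨hwU, hwB⟩
        rwa [Metric.mem_closedBall, dist_eq_norm] at this
      have h3 : ‖w - z₀‖ = 3*ε := by
        rw [hwdef, add_sub_cancel_left, norm_smul, hv1, mul_one, Real.norm_eq_abs,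
          abs_of_pos (by linarith)]
      have h2 : ‖w - z₀‖ ≤ 2*ε := by
        calc ‖w - z₀‖ = ‖(w - z) - (z₀ - z)‖ := by abel_nf
          _ ≤ ‖w - z‖ + ‖z₀ - z‖ := norm_sub_le _ _
          _ ≤ 2*ε := by linarith
      rw [h3] at h2
      linarith
    · exact heq
  have hzfst : z.fst = x := rfl
  have hzsnd : z.snd = y := rfl
  have hsum : ‖x‖ ^ q + ‖y‖ ^ q = 1 := by
    have hh := WithLp.prod_norm_eq_add hq z
    rw [hz1, hzfst, hzsnd] at hh
    have h2 : ((‖x‖ ^ q + ‖y‖ ^ q) ^ (1/q)) ^ q = 1 ^ q := by rw [← hh]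
    rwa [rpow_cancel' _ (by positivity), Real.one_rpow] at h2
  have hxq : 0 < ‖x‖ ^ q := Real.rpow_pos_of_pos hxpos _
  have hylt : ‖y‖ < 1 := by
    by_contra hge
    push_neg at hge
    have : (1:ℝ) ≤ ‖y‖ ^ q := Real.one_le_rpow hge hq.le
    linarith
  refine ⟨le_of_eq hxinv, fun ε hε => ?_⟩
  -- choose δ using continuity of r ↦ (1 - r^q)^(1/q) at ‖y‖
  have hgcont : ContinuousAt (fun r : ℝ => (1 - r ^ q) ^ (1/q)) ‖y‖ := by
    apply ContinuousAt.rpow_const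
    · exact continuousAt_const.sub (Real.continuousAt_rpow_const _ _ (Or.inr hq.le))
    · right; positivity
  have hgval : (1 - ‖y‖ ^ q) ^ (1/q) = ‖x‖ := by
    rw [show (1:ℝ) - ‖y‖ ^ q = ‖x‖ ^ q by linarith, rpow_cancel _ (norm_nonneg _)]
  have hb1 : (0:ℝ) < min (‖x‖/2) (ε * ‖x‖ / 4) := by positivity
  obtain ⟨δ₁, hδ₁pos, hδ₁⟩ := Metric.continuousAt_iff.mp hgcont _ hb1
  set δ : ℝ := min (min (δ₁/2) (ε * ‖x‖ / 4)) ((1 - ‖y‖)/2) with hδdef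
  have hδpos : 0 < δ := by
    apply lt_min (lt_min (by linarith) (by positivity)) (by linarith)
  obtain ⟨W, hW, ⟨z₀, hz₀W, hz₀B⟩, hWsub⟩ := h.2 δ hδpos
  have hz₀d : ‖z₀ - z‖ ≤ δ := by
    have := hWsub ⟨hz₀W, hz₀B⟩
    rwa [Metric.mem_closedBall, dist_eq_norm] at this
  set x₀ : X := z₀.fst with hx₀def
  set y₀ : Y := z₀.snd with hy₀def
  have hy₀d : ‖y₀ - y‖ ≤ δ := by
    have h1 := coord_snd (z₀ - z)
    have h2 : (z₀ - z).snd = y₀ - y := rfl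
    rw [h2] at h1
    exact h1.trans hz₀d
  have hδ3 : δ ≤ (1 - ‖y‖)/2 := min_le_right _ _
  have hδ2 : δ ≤ ε * ‖x‖ / 4 := le_trans (min_le_left _ _) (min_le_right _ _)
  have hδ1' : δ ≤ δ₁/2 := le_trans (min_le_left _ _) (min_le_left _ _)
  have hy₀lt : ‖y₀‖ < 1 := by
    have := norm_sub_norm_le y₀ y
    linarith
  have hy₀q : ‖y₀‖ ^ q < 1 := Real.rpow_lt_one (norm_nonneg _) hy₀lt hq
  have hA : (0:ℝ) < 1 - ‖y₀‖ ^ q := by linarith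
  set s : ℝ := (1 - ‖y₀‖ ^ q) ^ (1/q) with hsdef
  have hs : 0 < s := Real.rpow_pos_of_pos hA _
  have hsq : s ^ q = 1 - ‖y₀‖ ^ q := rpow_cancel' _ hA.le
  have hdist : dist ‖y₀‖ ‖y‖ < δ₁ := by
    rw [Real.dist_eq]
    have := abs_norm_sub_norm_le y₀ y
    linarith
  have hsx : |s - ‖x‖| < min (‖x‖/2) (ε * ‖x‖ / 4) := by
    have := hδ₁ hdist
    rwa [hgval, Real.dist_eq] at this
  have hs2 : ‖x‖/2 ≤ s := by
    have h1 := (abs_lt.mp (hsx.trans_le (min_le_left _ _))).1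
    linarith
  have hs4 : |s - ‖x‖| < ε * ‖x‖ / 4 := hsx.trans_le (min_le_right _ _)
  have hx₀s : ‖x₀‖ ≤ s := by
    have hsum₀ := sum_le z₀ hz₀B
    calc ‖x₀‖ = (‖x₀‖ ^ q) ^ (1/q) := (rpow_cancel _ (norm_nonneg _)).symm
      _ ≤ (s ^ q) ^ (1/q) :=
          Real.rpow_le_rpow (by positivity) (by rw [hsq]; linarith) (by positivity)
      _ = s := rpow_cancel _ hs.le
  set T : X → WithLp p (X × Y) := fun u => (WithLp.equiv p (X × Y)).symm (s • u, y₀)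
    with hTdef
  have hWo : IsOpen (X := WeakSpace ℝ (WithLp p (X × Y))) W := hW
  set A : X →L[ℝ] WithLp p (X × Y) :=
    (((WithLp.prodContinuousLinearEquiv p ℝ X Y).symm :
        (X × Y) →L[ℝ] WithLp p (X × Y)).comp
      ((ContinuousLinearMap.inl ℝ X Y).comp (s • ContinuousLinearMap.id ℝ X))) with hAdef
  set c₀ : WithLp p (X × Y) := (WithLp.equiv p (X × Y)).symm (0, y₀) with hc₀def
  have hdecomp : ∀ u : X, T u = A u + c₀ := by
    intro u
    show (WithLp.linearEquiv p ℝ (X × Y)).symm (s • u, y₀) = _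
    have h1 : ((s • u, y₀) : X × Y) = (s • u, (0 : Y)) + ((0 : X), y₀) := by simp
    rw [h1, map_add]
    rfl
  have hTc : @Continuous (WeakSpace ℝ X) (WeakSpace ℝ (WithLp p (X × Y))) _ _ T :=
    WeakBilin.continuous_of_continuous_eval ((topDualPairing ℝ (WithLp p (X × Y))).flip)
      (g := fun u : WeakSpace ℝ X => T u) fun f => by
      have heq : (fun u : WeakSpace ℝ X => f (T u))
          = fun u : WeakSpace ℝ X => (f.comp A) u + f c₀ := by
        funext u
        rw [hdecomp u, map_add]
        rfl
      show Continuous fun u : WeakSpace ℝ X => f (T u)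
      rw [heq]
      exact (weakTop_continuous_clm (f.comp A)).add continuous_const
  refine ⟨T ⁻¹' W, hWo.preimage hTc, ⟨s⁻¹ • x₀, ?_, ?_⟩, ?_⟩
  · show T (s⁻¹ • x₀) ∈ W
    have hTx₀ : T (s⁻¹ • x₀) = z₀ := by
      rw [hTdef]
      simp only [smul_inv_smul₀ hs.ne']
      rfl
    rwa [hTx₀]
  · show ‖s⁻¹ • x₀‖ ≤ 1
    rw [norm_smul, norm_inv, Real.norm_eq_abs, abs_of_pos hs]
    calc s⁻¹ * ‖x₀‖ ≤ s⁻¹ * s := mul_le_mul_of_nonneg_left hx₀s (by positivity)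
      _ = 1 := inv_mul_cancel₀ hs.ne'
  · rintro u ⟨huW, huB⟩
    have huB' : ‖u‖ ≤ 1 := huB
    have hTu : ‖T u‖ ≤ 1 := by
      apply norm_le
      have hfst : (T u).fst = s • u := rfl
      have hsnd : (T u).snd = y₀ := rfl
      rw [hfst, hsnd, norm_smul, Real.norm_eq_abs, abs_of_pos hs]
      have h1 : (s * ‖u‖) ^ q ≤ s ^ q := by
        apply Real.rpow_le_rpow (by positivity) ?_ hq.le
        nlinarith [norm_nonneg u]
      linarith
    have hTud : ‖T u - z‖ ≤ δ := by
      have := hWsub ⟨huW, hTu⟩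
      rwa [Metric.mem_closedBall, dist_eq_norm] at this
    have hsu : ‖s • u - x‖ ≤ δ := by
      have h1 := coord_fst (T u - z)
      have h2 : (T u - z).fst = s • u - x := rfl
      rw [h2] at h1
      exact h1.trans hTud
    show u ∈ Metric.closedBall (‖x‖⁻¹ • x) ε
    rw [Metric.mem_closedBall, dist_eq_norm]
    have key1 : ‖u - s⁻¹ • x‖ ≤ s⁻¹ * δ := by
      have heq2 : u - s⁻¹ • x = s⁻¹ • (s • u - x) := by
        rw [smul_sub, inv_smul_smul₀ hs.ne']
      rw [heq2, norm_smul, norm_inv, Real.norm_eq_abs, abs_of_pos hs]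
      exact mul_le_mul_of_nonneg_left hsu (by positivity)
    have key2 : ‖s⁻¹ • x - ‖x‖⁻¹ • x‖ = |s⁻¹ - ‖x‖⁻¹| * ‖x‖ := by
      rw [← sub_smul, norm_smul, Real.norm_eq_abs]
    have hb2 : s⁻¹ * δ ≤ ε/2 := by
      have hsinv : s⁻¹ ≤ (‖x‖/2)⁻¹ := inv_anti₀ (by positivity) hs2
      calc s⁻¹ * δ ≤ (‖x‖/2)⁻¹ * (ε * ‖x‖ / 4) :=
            mul_le_mul hsinv hδ2 hδpos.le (by positivity)
        _ = ε/2 := by rw [inv_div]; field_simp [hxpos.ne']; ring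
    have hb3 : |s⁻¹ - ‖x‖⁻¹| * ‖x‖ ≤ ε/2 := by
      have heq3 : s⁻¹ - ‖x‖⁻¹ = (‖x‖ - s)/(s * ‖x‖) := by
        rw [inv_eq_one_div, inv_eq_one_div, div_sub_div _ _ hs.ne' hxpos.ne', one_mul, mul_one]
      rw [heq3, abs_div, abs_of_pos (mul_pos hs hxpos), div_mul_eq_mul_div,
        div_le_iff₀ (mul_pos hs hxpos)]
      have h1 : |‖x‖ - s| ≤ ε * ‖x‖ / 4 := by rw [abs_sub_comm]; exact hs4.le
      nlinarith [h1, hs2, hxpos, hε, abs_nonneg (‖x‖ - s)]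
    calc ‖u - ‖x‖⁻¹ • x‖ = ‖(u - s⁻¹ • x) + (s⁻¹ • x - ‖x‖⁻¹ • x)‖ := by abel_nf
      _ ≤ ‖u - s⁻¹ • x‖ + ‖s⁻¹ • x - ‖x‖⁻¹ • x‖ := norm_add_le _ _
      _ ≤ s⁻¹ * δ + |s⁻¹ - ‖x‖⁻¹| * ‖x‖ := by rw [key2] at *; exact add_le_add key1 le_rfl
      _ ≤ ε/2 + ε/2 := add_le_add hb2 hb3
      _ = ε := by ring

set_option maxHeartbeats 2000000 in
/-- For Banach spaces `X`, `Y`, `1 < p < ∞`, `x ≠ 0`, `y ≠ 0`: if `(x, y)` is a semi PC point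
of `B_{X ⊕_p Y}`, then `x/‖x‖` is a semi PC point of `B_X` and `y/‖y‖` is a semi PC point of
`B_Y`. -/
theorem isSemiPCOfBall_of_prod
    {X Y : Type*} [NormedAddCommGroup X] [NormedSpace ℝ X] [CompleteSpace X]
    [NormedAddCommGroup Y] [NormedSpace ℝ Y] [CompleteSpace Y]
    (p : ENNReal) [Fact (1 ≤ p)] (hp1 : 1 < p) (hp : p ≠ ⊤)
    (x : X) (y : Y) (hx : x ≠ 0) (hy : y ≠ 0)
    (h : IsSemiPCOfBall ((WithLp.equiv p (X × Y)).symm (x, y))) :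
    IsSemiPCOfBall (‖x‖⁻¹ • x) ∧ IsSemiPCOfBall (‖y‖⁻¹ • y) := by
  constructor
  · exact aux_fst p hp x y hx h
  · have h2 : IsSemiPCOfBall ((WithLp.equiv p (Y × X)).symm (y, x)) :=
      IsSemiPCOfBall.map_li (prodSwapLi p hp X Y) h
    exact aux_fst p hp y x hy h2
end
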